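/- arXiv:1104.5625 — 3 statements merged into one kernel-verified Lean document; each statement's English description precedes it below -/
import Mathlib

section
/- Let $w:[0,\infty)\to\mathbb{R}$ be continuously differentiable with $w(0)=0$, $w(r)>0$ for all $r>0$, and with $w'$ non-decreasing on $[0,\infty)$. Then for every integer $m \geq 1$ and every $r>0$: $w(r)^m \leq m\, w'(r) \int_0^r w(s)^{m-1}\,ds$. In particular, if moreover $w'>0$, then $q_w(r)\,\eta_w(r) \geq 1/m$ for all $r>0$. -/
/-- Let `w : [0,∞) → ℝ` be continuously differentiable with `w 0 = 0`, `w r > 0` for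
`r > 0`, and `w'` non-decreasing on `[0,∞)`. Then for every integer `m ≥ 1` and every
`r > 0`: `w(r)^m ≤ m w'(r) ∫_0^r w(s)^(m-1) ds`. In particular, if moreover `w' > 0`,
then `q_w(r) η_w(r) ≥ 1/m` for all `r > 0`. -/
theorem convex_warping_balanced_from_below (w : ℝ → ℝ)
    (hw : ContDiff ℝ 1 w) (h0 : w 0 = 0) (hpos : ∀ r > (0:ℝ), 0 < w r)
    (hmono : MonotoneOn (deriv w) (Set.Ici (0:ℝ))) :
    ∀ m : ℕ, 1 ≤ m → ∀ r > (0:ℝ),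
      (w r ^ m ≤ (m : ℝ) * deriv w r * ∫ s in (0:ℝ)..r, w s ^ (m - 1)) ∧
      ((∀ t : ℝ, 0 ≤ t → 0 < deriv w t) →
        ((∫ s in (0:ℝ)..r, w s ^ (m - 1)) / w r ^ (m - 1)) * (deriv w r / w r)
          ≥ 1 / m) := by
  intro m hm r hr
  have hc : Continuous w := hw.continuous
  have hd : Differentiable ℝ w := hw.differentiable one_ne_zero
  have hc' : Continuous (deriv w) := hw.continuous_deriv le_rfl
  have hwnn : ∀ s ∈ Set.Icc (0:ℝ) r, 0 ≤ w s := by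
    intro s hs
    rcases eq_or_lt_of_le hs.1 with h | h
    · simp [← h, h0]
    · exact (hpos s h).le
  have hderiv : ∀ s ∈ Set.uIcc (0:ℝ) r, HasDerivAt (fun x => w x ^ m)
      ((m:ℝ) * w s ^ (m-1) * deriv w s) s := fun s _ => (hd s).hasDerivAt.pow m
  have hint1 : IntervalIntegrable (fun s => (m:ℝ) * w s ^ (m-1) * deriv w s)
      MeasureTheory.volume 0 r :=
    ((continuous_const.mul (hc.pow _)).mul hc').intervalIntegrable 0 r
  have hint2 : IntervalIntegrable (fun s => ((m:ℝ) * deriv w r) * w s ^ (m-1))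
      MeasureTheory.volume 0 r :=
    (continuous_const.mul (hc.pow _)).intervalIntegrable 0 r
  have hftc : ∫ s in (0:ℝ)..r, (m:ℝ) * w s ^ (m-1) * deriv w s = w r ^ m - w 0 ^ m :=
    intervalIntegral.integral_eq_sub_of_hasDerivAt hderiv hint1
  have h0m : w 0 ^ m = 0 := by rw [h0]; exact zero_pow (by omega)
  have hmono' : ∫ s in (0:ℝ)..r, (m:ℝ) * w s ^ (m-1) * deriv w s
      ≤ ∫ s in (0:ℝ)..r, ((m:ℝ) * deriv w r) * w s ^ (m-1) := by
    apply intervalIntegral.integral_mono_on hr.le hint1 hint2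
    intro s hs
    have h1 : deriv w s ≤ deriv w r := hmono hs.1 hr.le hs.2
    have h2 : (0:ℝ) ≤ w s ^ (m-1) := pow_nonneg (hwnn s hs) _
    have h3 : (0:ℝ) ≤ (m:ℝ) := Nat.cast_nonneg m
    calc (m:ℝ) * w s ^ (m-1) * deriv w s
        ≤ (m:ℝ) * w s ^ (m-1) * deriv w r :=
          mul_le_mul_of_nonneg_left h1 (mul_nonneg h3 h2)
      _ = (m:ℝ) * deriv w r * w s ^ (m-1) := by ring
  rw [intervalIntegral.integral_const_mul] at hmono'
  have key : w r ^ m ≤ (m : ℝ) * deriv w r * ∫ s in (0:ℝ)..r, w s ^ (m - 1) := by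
    rw [hftc, h0m] at hmono'; linarith
  refine ⟨key, fun hpos' => ?_⟩
  have hwr := hpos r hr
  have hdr := hpos' r hr.le
  have hm0 : (0:ℝ) < m := by exact_mod_cast Nat.pos_of_ne_zero (by omega)
  have hpow : (0:ℝ) < w r ^ (m-1) := pow_pos hwr _
  rw [ge_iff_le, div_mul_div_comm, div_le_div_iff₀ hm0 (by positivity)]
  have hps : w r ^ (m-1) * w r = w r ^ m := by
    rw [← pow_succ]; congr 1; omega
  nlinarith [key]
end

section
/- Let $b<0$, let $m \geq 2$ be an integer, let $C \geq \sqrt{-b}$, and set $w_b(r)=\frac{1}{\sqrt{-b}}\sinh(\sqrt{-b}\,r)$ and $W(r)=w_b(r)\,e^{-\frac{m}{m-1}Cr}$. Then there exists $r>0$ such that $q_W(r)\big(\eta_{w_b}(r)-C\big) < \frac{1}{m}$, where $q_W(r)=\frac{\int_0^r W(s)^{m-1}ds}{W(r)^{m-1}}$ and $\eta_{w_b}=w_b'/w_b$. That is, the isoperimetric comparison space determined by $w_b$ and the constant bounding function $h\equiv C$ is not $w_b$-balanced from below. -/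
private lemma sinh_le_exp_half (x : ℝ) : Real.sinh x ≤ Real.exp x / 2 := by
  rw [Real.sinh_eq]
  have := (Real.exp_pos (-x)).le
  linarith

private lemma exp_quarter_le_sinh {x : ℝ} (hx : 1 ≤ x) : Real.exp x / 4 ≤ Real.sinh x := by
  rw [Real.sinh_eq]
  have h1 : Real.exp (-x) ≤ 1 := by
    rw [← Real.exp_zero]; exact Real.exp_le_exp.mpr (by linarith)
  have h2 : (2:ℝ) ≤ Real.exp x := by nlinarith [Real.add_one_le_exp x]
  linarith

private lemma sq_le_four_exp {x : ℝ} (hx : 0 ≤ x) : x * x ≤ 4 * Real.exp x := by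
  have h := Real.add_one_le_exp (x/2)
  have h2 : Real.exp x = Real.exp (x/2) * Real.exp (x/2) := by
    rw [← Real.exp_add]; ring_nf
  nlinarith

set_option maxHeartbeats 1000000 in
/-- Let `b < 0`, `m ≥ 2` an integer, `C ≥ √(-b)`, `w_b r = sinh(√(-b) r)/√(-b)` and
`W r = w_b r · e^(-(m/(m-1)) C r)`. Then there exists `r > 0` with
`q_W(r) (η_{w_b}(r) - C) < 1/m`, where `q_W(r) = (∫_0^r W(s)^(m-1) ds)/W(r)^(m-1)` and
`η_{w_b} = w_b'/w_b`. That is, the isoperimetric comparison space determined by `w_b` and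
the constant bounding function `h ≡ C` is not `w_b`-balanced from below. -/
theorem isoperimetric_space_not_balanced_from_below (b : ℝ) (hb : b < 0) (m : ℕ)
    (hm : 2 ≤ m) (C : ℝ) (hC : Real.sqrt (-b) ≤ C) (w W : ℝ → ℝ)
    (hw : w = fun r => Real.sinh (Real.sqrt (-b) * r) / Real.sqrt (-b))
    (hW : W = fun r => w r * Real.exp (-(((m : ℝ) / ((m : ℝ) - 1)) * C) * r)) :
    ∃ r > (0:ℝ),
      ((∫ s in (0:ℝ)..r, W s ^ (m - 1)) / W r ^ (m - 1)) * (deriv w r / w r - C)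
        < 1 / m := by
  have hb' : 0 < -b := by linarith
  set a := Real.sqrt (-b) with ha_def
  have ha : 0 < a := Real.sqrt_pos.mpr hb'
  have hmR : (2:ℝ) ≤ (m:ℝ) := by exact_mod_cast hm
  have hm1 : (1:ℝ) ≤ (m:ℝ) - 1 := by linarith
  have hm0 : (0:ℝ) < (m:ℝ) := by linarith
  -- value and derivative of w
  have hwval : ∀ s : ℝ, w s = Real.sinh (a * s) / a := by
    intro s; rw [hw]
  have hwderiv : ∀ s : ℝ, deriv w s = Real.cosh (a * s) := by
    intro s
    have h1 : HasDerivAt (fun t : ℝ => Real.sinh (a * t) / a) (Real.cosh (a * s)) s := by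
      have h := (((hasDerivAt_id s).const_mul a).sinh).div_const a
      simp only [mul_one] at h
      convert h using 1
      rfl
      rfl
      simp [ha.ne']
      exact (mul_div_cancel_right₀ (Real.cosh (a * s)) ha.ne').symm
    rw [hw]
    exact h1.deriv
  have hWval : ∀ s : ℝ, W s = Real.sinh (a * s) / a
      * Real.exp (-(((m : ℝ) / ((m : ℝ) - 1)) * C) * s) := by
    intro s; simp only [hW]; rw [hwval]
  have hWnonneg : ∀ s : ℝ, 0 ≤ s → 0 ≤ W s := by
    intro s hs
    rw [hWval]
    have : (0:ℝ) ≤ Real.sinh (a * s) := by positivity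
    positivity
  by_cases hac : a < C
  · -- case √(-b) < C : pick r with η(r) < C, the product is nonpositive
    have hCa0 : 0 < C - a := by linarith
    obtain ⟨M, hM_def⟩ : ∃ x : ℝ, x = (C + a) / (C - a) + 1 := ⟨_, rfl⟩
    have hM1 : 1 < M := by
      have : 0 < (C + a) / (C - a) := div_pos (by linarith) hCa0
      rw [hM_def]; linarith
    obtain ⟨r, hr_def⟩ : ∃ x : ℝ, x = Real.log M / (2 * a) := ⟨_, rfl⟩
    have hr0 : 0 < r := by
      rw [hr_def]; exact div_pos (Real.log_pos hM1) (by linarith)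
    refine ⟨r, hr0, ?_⟩
    have hqnn : 0 ≤ (∫ s in (0:ℝ)..r, W s ^ (m - 1)) / W r ^ (m - 1) := by
      apply div_nonneg
      · apply intervalIntegral.integral_nonneg hr0.le
        intro s hs
        exact pow_nonneg (hWnonneg s hs.1) _
      · exact pow_nonneg (hWnonneg r hr0.le) _
    have hneg : deriv w r / w r - C < 0 := by
      rw [hwderiv, hwval]
      have hsp : 0 < Real.sinh (a * r) := Real.sinh_pos_iff.mpr (by positivity)
      have key : a * Real.cosh (a * r) < C * Real.sinh (a * r) := by
        obtain ⟨t, ht_def⟩ : ∃ x : ℝ, x = Real.exp (a * r) := ⟨_, rfl⟩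
        have ht : 0 < t := by rw [ht_def]; exact Real.exp_pos _
        have htt : t * t = M := by
          rw [ht_def, ← Real.exp_add]
          rw [show a * r + a * r = Real.log M by rw [hr_def]; field_simp; ring]
          exact Real.exp_log (by linarith)
        have hinv : t * t⁻¹ = 1 := mul_inv_cancel₀ ht.ne'
        have hMval : (C - a) * M = 2 * C := by
          rw [hM_def]; field_simp; ring
        rw [Real.cosh_eq, Real.sinh_eq, Real.exp_neg, ← ht_def]
        nlinarith [mul_pos hCa0 ht, mul_pos ht ht]
      have h1 : Real.cosh (a * r) / (Real.sinh (a * r) / a) < C := by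
        rw [div_lt_iff₀ (by positivity)]
        rw [show C * (Real.sinh (a * r) / a) = C * Real.sinh (a * r) / a from by ring,
          lt_div_iff₀ ha]
        nlinarith [key]
      linarith
    calc ((∫ s in (0:ℝ)..r, W s ^ (m - 1)) / W r ^ (m - 1)) * (deriv w r / w r - C)
        ≤ 0 := mul_nonpos_iff.mpr (Or.inl ⟨hqnn, hneg.le⟩)
      _ < 1 / m := by positivity
  · -- case C = √(-b)
    have hCeq : C = a := le_antisymm (not_lt.mp hac) hC
    subst hCeq
    obtain ⟨r, hr_def⟩ : ∃ x : ℝ, x = ((m:ℝ) * 2 ^ (m + 3) + 1) / a := ⟨_, rfl⟩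
    have hr0 : 0 < r := by
      rw [hr_def]; exact div_pos (by positivity) ha
    have hx : a * r = (m:ℝ) * 2 ^ (m + 3) + 1 := by
      rw [hr_def]; field_simp
    have hx1 : (1:ℝ) ≤ a * r := by
      rw [hx]
      have : (0:ℝ) ≤ (m:ℝ) * 2 ^ (m + 3) := by positivity
      linarith
    have hk : a ≤ (m:ℝ) / ((m:ℝ) - 1) * a := by
      have h1 : (1:ℝ) ≤ (m:ℝ) / ((m:ℝ) - 1) := by
        rw [le_div_iff₀ (by linarith)]; linarith
      nlinarith
    -- upper bound on the integrand
    have hWle : ∀ s ∈ Set.Icc (0:ℝ) r, W s ^ (m - 1) ≤ (1 / (2 * a)) ^ (m - 1) := by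
      intro s hs
      have hs0 : 0 ≤ s := hs.1
      have hW0 : 0 ≤ W s := hWnonneg s hs0
      have hWs : W s ≤ 1 / (2 * a) := by
        rw [hWval]
        have h2 : Real.exp (-(((m:ℝ) / ((m:ℝ) - 1)) * a) * s) ≤ Real.exp (-(a * s)) := by
          apply Real.exp_le_exp.mpr
          nlinarith [hk, hs0]
        have h3 : Real.exp (a * s) * Real.exp (-(a * s)) = 1 := by
          rw [← Real.exp_add]; simp
        have hsinh : Real.sinh (a * s) / a ≤ Real.exp (a * s) / 2 / a := by
          gcongr
          exact sinh_le_exp_half _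
        calc Real.sinh (a * s) / a * Real.exp (-(((m:ℝ) / ((m:ℝ) - 1)) * a) * s)
            ≤ Real.exp (a * s) / 2 / a * Real.exp (-(a * s)) := by
              apply mul_le_mul hsinh h2 (Real.exp_pos _).le (by positivity)
          _ = 1 / (2 * a) := by
              rw [div_div, div_mul_eq_mul_div, h3]
      exact pow_le_pow_left₀ hW0 hWs _
    have hcont : Continuous (fun s => W s ^ (m - 1)) := by
      rw [hW, hw]
      fun_prop
    have hN : (∫ s in (0:ℝ)..r, W s ^ (m - 1)) ≤ (1 / (2 * a)) ^ (m - 1) * r := by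
      calc (∫ s in (0:ℝ)..r, W s ^ (m - 1))
          ≤ ∫ _ in (0:ℝ)..r, (1 / (2 * a)) ^ (m - 1) := by
            apply intervalIntegral.integral_mono_on hr0.le
              (hcont.intervalIntegrable _ _) (intervalIntegrable_const) hWle
        _ = (1 / (2 * a)) ^ (m - 1) * r := by
            simp [intervalIntegral.integral_const, mul_comm]
    -- lower bound on W r ^ (m-1)
    have hsinh4 : Real.exp (a * r) / 4 ≤ Real.sinh (a * r) := exp_quarter_le_sinh hx1
    have hWr : Real.exp (a * r) / (4 * a) * Real.exp (-(((m:ℝ) / ((m:ℝ) - 1)) * a) * r)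
        ≤ W r := by
      rw [hWval]
      have h1 : Real.exp (a * r) / (4 * a) ≤ Real.sinh (a * r) / a := by
        rw [show Real.exp (a * r) / (4 * a) = Real.exp (a * r) / 4 / a from by ring]
        gcongr
      exact mul_le_mul_of_nonneg_right h1 (Real.exp_pos _).le
    have hWr0 : 0 < W r := lt_of_lt_of_le (by positivity) hWr
    have hEE : Real.exp (a * r) ^ (m - 1)
        * Real.exp (-(((m:ℝ) / ((m:ℝ) - 1)) * a) * r) ^ (m - 1)
        = Real.exp (-(a * r)) := by
      rw [← Real.exp_nat_mul, ← Real.exp_nat_mul, ← Real.exp_add]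
      congr 1
      have hcast : ((m - 1 : ℕ) : ℝ) = (m:ℝ) - 1 := by
        have h1 : 1 ≤ m := by omega
        push_cast [h1]
        ring
      rw [hcast]
      field_simp
      ring
    obtain ⟨E, hE_def⟩ : ∃ x : ℝ, x = Real.exp (-(a * r)) := ⟨_, rfl⟩
    have hEpos : 0 < E := by rw [hE_def]; exact Real.exp_pos _
    have hTE : Real.exp (a * r) * E = 1 := by
      rw [hE_def, ← Real.exp_add]; simp
    have hDlb : (1 / (4 * a)) ^ (m - 1) * E ≤ W r ^ (m - 1) := by
      rw [hE_def]
      have h1 := pow_le_pow_left₀ (by positivity :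
        (0:ℝ) ≤ Real.exp (a * r) / (4 * a) * Real.exp (-(((m:ℝ) / ((m:ℝ) - 1)) * a) * r))
        hWr (m - 1)
      calc (1 / (4 * a)) ^ (m - 1) * Real.exp (-(a * r))
          = (Real.exp (a * r) / (4 * a)
              * Real.exp (-(((m:ℝ) / ((m:ℝ) - 1)) * a) * r)) ^ (m - 1) := by
            rw [show Real.exp (a * r) / (4 * a)
                * Real.exp (-(((m:ℝ) / ((m:ℝ) - 1)) * a) * r)
                = (1 / (4 * a)) * (Real.exp (a * r)
                  * Real.exp (-(((m:ℝ) / ((m:ℝ) - 1)) * a) * r)) from by ring]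
            rw [mul_pow, mul_pow, hEE]
        _ ≤ W r ^ (m - 1) := h1
    -- the mean curvature term
    have hsp : 0 < Real.sinh (a * r) := Real.sinh_pos_iff.mpr (by positivity)
    have hetaeq : deriv w r / w r - a = a * Real.exp (-(a * r)) / Real.sinh (a * r) := by
      rw [hwderiv, hwval, div_div_eq_mul_div, eq_div_iff hsp.ne', sub_mul,
        div_mul_cancel₀ _ hsp.ne']
      have h := Real.cosh_sub_sinh (a * r)
      linear_combination a * h
    have heta0 : 0 ≤ deriv w r / w r - a := by
      rw [hetaeq]; positivity
    have heta : deriv w r / w r - a ≤ 4 * a * (E * E) := by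
      rw [hetaeq, hE_def]
      have h1 : a * Real.exp (-(a * r)) / Real.sinh (a * r)
          ≤ a * Real.exp (-(a * r)) / (Real.exp (a * r) / 4) := by
        gcongr
      have h2 : a * Real.exp (-(a * r)) / (Real.exp (a * r) / 4)
          = 4 * a * (Real.exp (-(a * r)) * Real.exp (-(a * r))) := by
        rw [div_div_eq_mul_div, div_eq_iff (Real.exp_pos _).ne']
        have hTE' : Real.exp (a * r) * Real.exp (-(a * r)) = 1 := by
          rw [← Real.exp_add]; simp
        linear_combination (-(4 * a * Real.exp (-(a * r)))) * hTE'
      linarith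
    -- final assembly
    refine ⟨r, hr0, ?_⟩
    have hD0 : 0 < W r ^ (m - 1) := pow_pos hWr0 _
    rw [div_mul_eq_mul_div, div_lt_iff₀ hD0]
    have hcore : ((1 / (2 * a)) ^ (m - 1) * r) * (4 * a * (E * E))
        < 1 / (m:ℝ) * ((1 / (4 * a)) ^ (m - 1) * E) := by
      have hsplit : ((1:ℝ) / (4 * a)) ^ (m - 1)
          = (1 / (2 * a)) ^ (m - 1) * (1 / 2) ^ (m - 1) := by
        rw [← mul_pow]
        congr 1
        field_simp
        ring
      have hc : (0:ℝ) < (1 / (2 * a)) ^ (m - 1) := by positivity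
      have hinner : r * (4 * a * (E * E)) < 1 / (m:ℝ) * ((1 / 2) ^ (m - 1) * E) := by
        have hXpos : 0 < a * r := by positivity
        have hsq : (a * r) * (a * r) ≤ 4 * Real.exp (a * r) := sq_le_four_exp hXpos.le
        have h23 : (2:ℝ) ^ (m + 3) = 2 ^ (m + 1) * 4 := by
          rw [show m + 3 = (m + 1) + 2 from by omega, pow_add]
          norm_num
        have hXgt : (m:ℝ) * (2 ^ (m + 1) * 4) < a * r := by
          rw [hx, h23]; linarith
        have hmul := mul_lt_mul_of_pos_right hXgt hXpos
        have key : (m:ℝ) * 2 ^ (m + 1) * (a * r) < Real.exp (a * r) := by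
          linarith [hmul, hsq]
        have s1 : (m:ℝ) * 2 ^ (m + 1) * (a * r) * E < 1 := by
          have h := mul_lt_mul_of_pos_right key hEpos
          rwa [hTE] at h
        have s2 : (m:ℝ) * 2 ^ (m + 1) * (a * r) * E * E < E := by
          have h := mul_lt_mul_of_pos_right s1 hEpos
          simpa using h
        have hhalf : ((1:ℝ) / 2) ^ (m - 1) * 2 ^ (m + 1) = 4 := by
          have h2 : (2:ℝ) ^ (m + 1) = 2 ^ (m - 1) * 4 := by
            rw [show m + 1 = (m - 1) + 2 from by omega, pow_add]
            norm_num
          rw [div_pow, one_pow, h2]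
          have : ((2:ℝ)) ^ (m - 1) ≠ 0 := by positivity
          field_simp
        have hPpos : (0:ℝ) < ((1:ℝ) / 2) ^ (m - 1) := by positivity
        have s3 := mul_lt_mul_of_pos_left s2 hPpos
        have s4 : ((1:ℝ) / 2) ^ (m - 1) * ((m:ℝ) * 2 ^ (m + 1) * (a * r) * E * E)
            = 4 * ((m:ℝ) * (a * r) * (E * E)) := by
          rw [show ((1:ℝ) / 2) ^ (m - 1) * ((m:ℝ) * 2 ^ (m + 1) * (a * r) * E * E)
              = (((1:ℝ) / 2) ^ (m - 1) * 2 ^ (m + 1)) * ((m:ℝ) * (a * r) * (E * E))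
              from by ring, hhalf]
        rw [show (1:ℝ) / (m:ℝ) * ((1 / 2) ^ (m - 1) * E)
            = ((1 / 2) ^ (m - 1) * E) / (m:ℝ) from by ring, lt_div_iff₀ hm0]
        have s5 : ((1:ℝ) / 2) ^ (m - 1) * E - 4 * ((m:ℝ) * (a * r) * (E * E)) > 0 := by
          linarith [s3, s4]
        linarith [s5]
      calc ((1 / (2 * a)) ^ (m - 1) * r) * (4 * a * (E * E))
          = (1 / (2 * a)) ^ (m - 1) * (r * (4 * a * (E * E))) := by ring
        _ < (1 / (2 * a)) ^ (m - 1) * (1 / (m:ℝ) * ((1 / 2) ^ (m - 1) * E)) :=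
            mul_lt_mul_of_pos_left hinner hc
        _ = 1 / (m:ℝ) * ((1 / (4 * a)) ^ (m - 1) * E) := by
            rw [hsplit]; ring
    calc (∫ s in (0:ℝ)..r, W s ^ (m - 1)) * (deriv w r / w r - a)
        ≤ ((1 / (2 * a)) ^ (m - 1) * r) * (4 * a * (E * E)) := by
          apply mul_le_mul hN heta heta0 (by positivity)
      _ < 1 / (m:ℝ) * ((1 / (4 * a)) ^ (m - 1) * E) := hcore
      _ ≤ 1 / (m:ℝ) * W r ^ (m - 1) := by
          apply mul_le_mul_of_nonneg_left hDlb (by positivity)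
end

section
/- Let $A, B : (0,\infty) \to (0,\infty)$ be differentiable functions such that $\frac{A'(t)}{A(t)} \geq \frac{B'(t)}{B(t)}$ for all $t>0$, such that $\sup_{t>0} \frac{A(t)}{B(t)} < \infty$, and such that $\lim_{t\to\infty} \frac{B'(t)}{B(t)} = L$ exists. Then there exists a strictly increasing sequence $(t_i)$ with $t_i \to \infty$ and $\lim_{i\to\infty} \frac{A'(t_i)}{A(t_i)} = L$; in particular $\liminf_{t\to\infty} \frac{A'(t)}{A(t)} \leq L$. -/
/-- Let `A, B : (0,∞) → (0,∞)` be differentiable with `A'/A ≥ B'/B` on `(0,∞)`,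
`sup_{t>0} A(t)/B(t) < ∞`, and `B'(t)/B(t) → L` as `t → ∞`. Then there is a strictly
increasing sequence `(tᵢ)` of positive reals with `tᵢ → ∞` and `A'(tᵢ)/A(tᵢ) → L`;
in particular `liminf_{t→∞} A'(t)/A(t) ≤ L`. -/
theorem exists_seq_log_deriv_tendsto (A B : ℝ → ℝ) (L : ℝ)
    (hApos : ∀ t > (0:ℝ), 0 < A t) (hBpos : ∀ t > (0:ℝ), 0 < B t)
    (hAdiff : ∀ t > (0:ℝ), DifferentiableAt ℝ A t)
    (hBdiff : ∀ t > (0:ℝ), DifferentiableAt ℝ B t)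
    (hineq : ∀ t > (0:ℝ), deriv B t / B t ≤ deriv A t / A t)
    (hbdd : ∃ M : ℝ, ∀ t > (0:ℝ), A t / B t ≤ M)
    (hlim : Filter.Tendsto (fun t => deriv B t / B t) Filter.atTop (nhds L)) :
    (∃ t : ℕ → ℝ, StrictMono t ∧ (∀ i, 0 < t i) ∧
      Filter.Tendsto t Filter.atTop Filter.atTop ∧
      Filter.Tendsto (fun i => deriv A (t i) / A (t i)) Filter.atTop (nhds L)) ∧
    Filter.liminf (fun t => deriv A t / A t) Filter.atTop ≤ L := by
  obtain ⟨M, hM⟩ := hbdd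
  set f : ℝ → ℝ := fun t => deriv A t / A t - deriv B t / B t with hf_def
  set g : ℝ → ℝ := fun s => Real.log (A s) - Real.log (B s) with hg_def
  -- derivative of g
  have hg : ∀ t > (0:ℝ), HasDerivAt g (f t) t := by
    intro t ht
    have hA := (hAdiff t ht).hasDerivAt
    have hB := (hBdiff t ht).hasDerivAt
    have h1 := (Real.hasDerivAt_log (hApos t ht).ne').comp t hA
    have h2 := (Real.hasDerivAt_log (hBpos t ht).ne').comp t hB
    simpa [hf_def, div_eq_inv_mul] using (by have h3 : HasDerivAt g _ t := h1.sub h2; exact h3)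
  -- g is bounded above by log M
  have hgle : ∀ t > (0:ℝ), g t ≤ Real.log M := by
    intro t ht
    have h1 : g t = Real.log (A t / B t) := by
      simp [hg_def, Real.log_div (hApos t ht).ne' (hBpos t ht).ne']
    rw [h1]
    exact ((Real.log_le_log_iff (div_pos (hApos t ht) (hBpos t ht))
      ((div_pos (hApos t ht) (hBpos t ht)).trans_le (hM t ht))).2 (hM t ht))
  -- f is nonnegative on (0,∞)
  have hfnn : ∀ t > (0:ℝ), 0 ≤ f t := fun t ht => sub_nonneg.2 (hineq t ht)
  -- key claim
  have key : ∀ ε > (0:ℝ), ∀ T : ℝ, ∃ t, T < t ∧ 0 < t ∧ f t < ε := by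
    intro ε hε T
    by_contra hcon
    push_neg at hcon
    set S : ℝ := max T 0 + 1 with hS_def
    have hS0 : (0:ℝ) ≤ max T 0 := le_max_right _ _
    have hS1 : T ≤ max T 0 := le_max_left _ _
    have hSpos : ∀ x : ℝ, S ≤ x → 0 < x := by
      intro x hx; simp only [hS_def] at hx; linarith
    have hST : ∀ x : ℝ, S ≤ x → T < x := by
      intro x hx; simp only [hS_def] at hx; linarith
    set φ : ℝ → ℝ := fun s => g s - ε * s with hφ_def
    have hφ : ∀ x ∈ Set.Ici S, HasDerivAt φ (f x - ε) x := by
      intro x hx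
      exact (hg x (hSpos x hx)).sub (by simpa using (hasDerivAt_id x).const_mul ε)
    have hmono : MonotoneOn φ (Set.Ici S) := by
      apply monotoneOn_of_deriv_nonneg (convex_Ici S)
      · exact fun x hx => (hφ x hx).differentiableAt.continuousAt.continuousWithinAt
      · intro x hx
        rw [interior_Ici] at hx
        exact ((hφ x (Set.mem_Ici.mpr (le_of_lt (Set.mem_Ioi.mp hx)))).differentiableAt).differentiableWithinAt
      · intro x hx
        rw [interior_Ici] at hx
        rw [(hφ x (Set.mem_Ici.mpr (le_of_lt (Set.mem_Ioi.mp hx)))).deriv]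
        have := hcon x (hST x (le_of_lt (Set.mem_Ioi.mp hx))) (hSpos x (le_of_lt (Set.mem_Ioi.mp hx)))
        linarith
    -- pick a large time
    set t : ℝ := max S ((Real.log M - (g S - ε * S) + 1) / ε) with ht_def
    have htS : S ≤ t := le_max_left _ _
    have h2 : φ S ≤ φ t := hmono (Set.self_mem_Ici) htS htS
    have h3 : Real.log M - (g S - ε * S) + 1 ≤ ε * t := by
      have := le_max_right S ((Real.log M - (g S - ε * S) + 1) / ε)
      calc Real.log M - (g S - ε * S) + 1 = ((Real.log M - (g S - ε * S) + 1) / ε) * ε := by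
            field_simp
        _ ≤ t * ε := by nlinarith
        _ = ε * t := mul_comm _ _
    have h4 : g t ≤ Real.log M := hgle t (hSpos t htS)
    simp only [hφ_def] at h2
    linarith
  -- construct the sequence
  have key' : ∀ (n : ℕ) (T : ℝ), ∃ t, T < t ∧ 0 < t ∧ f t < 1 / (n + 1) := by
    intro n T
    exact key (1 / (n + 1)) (by positivity) T
  choose F hF1 hF2 hF3 using key'
  set t : ℕ → ℝ := fun n => Nat.rec (F 0 1) (fun n tn => F (n + 1) (max tn (n + 1))) n
    with ht_def
  have hts : ∀ n, t (n + 1) = F (n + 1) (max (t n) (n + 1)) := fun n => rfl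
  have htpos : ∀ n, 0 < t n := by
    intro n
    cases n with
    | zero => exact hF2 0 1
    | succ n => rw [hts n]; exact hF2 _ _
  have htmono : StrictMono t := by
    apply strictMono_nat_of_lt_succ
    intro n
    rw [hts n]
    exact lt_of_le_of_lt (le_max_left _ _) (hF1 (n + 1) _)
  have htge : ∀ n : ℕ, (n : ℝ) ≤ t n := by
    intro n
    cases n with
    | zero => exact_mod_cast (htpos 0).le
    | succ n =>
      rw [hts n]
      refine le_of_lt (lt_of_le_of_lt ?_ (hF1 (n + 1) _))
      push_cast
      exact le_max_right _ _
  have httop : Filter.Tendsto t Filter.atTop Filter.atTop :=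
    Filter.tendsto_atTop_mono htge tendsto_natCast_atTop_atTop
  have hbound : ∀ n, f (t n) < 1 / (n + 1) := by
    intro n
    cases n with
    | zero => exact hF3 0 1
    | succ n => rw [hts n]; exact hF3 (n + 1) _
  have hf0 : Filter.Tendsto (fun n => f (t n)) Filter.atTop (nhds 0) := by
    apply squeeze_zero (fun n => hfnn (t n) (htpos n)) (fun n => (hbound n).le)
    exact tendsto_one_div_add_atTop_nhds_zero_nat
  have hBlim : Filter.Tendsto (fun n => deriv B (t n) / B (t n)) Filter.atTop (nhds L) :=
    hlim.comp httop
  have hAlim : Filter.Tendsto (fun n => deriv A (t n) / A (t n)) Filter.atTop (nhds L) := by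
    have := hf0.add hBlim
    rw [zero_add] at this
    convert this using 2 with n
    simp [hf_def]
  refine ⟨⟨t, htmono, htpos, httop, hAlim⟩, ?_⟩
  -- liminf part
  have hLB : Filter.IsBoundedUnder (· ≥ ·) Filter.atTop (fun s => deriv A s / A s) := by
    refine ⟨L - 1, ?_⟩
    rw [Filter.eventually_map]
    have h1 : ∀ᶠ s in Filter.atTop, L - 1 ≤ deriv B s / B s := by
      filter_upwards [hlim.eventually (eventually_ge_nhds (by linarith : L - 1 < L))] with s hs
      exact hs
    filter_upwards [h1, Filter.eventually_ge_atTop (1:ℝ)] with s hs hs1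
    exact le_trans hs (hineq s (by linarith))
  have hmain : ∀ ε > (0:ℝ), Filter.liminf (fun s => deriv A s / A s) Filter.atTop ≤ L + ε := by
    intro ε hε
    apply Filter.liminf_le_of_frequently_le _ hLB
    have hev : ∀ᶠ n in Filter.atTop, deriv A (t n) / A (t n) ≤ L + ε :=
      hAlim.eventually (eventually_le_nhds (by linarith : L < L + ε))
    rw [Filter.frequently_atTop]
    intro T
    obtain ⟨n, hn1, hn2⟩ := (hev.and (httop.eventually_ge_atTop T)).exists
    exact ⟨t n, hn2, hn1⟩
  exact le_of_forall_pos_le_add hmain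
end
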